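/- Every type function f ∈ 𝓣_n is a monotone subtype. -/

import Mathlib

open Classical

namespace HOT

/-- Binary strings of length `n`, identified with `{0,1}^n`. -/
abbrev Str (n : ℕ) := Fin n → Bool

/-- The all-zeros string `θ`. -/
def theta (n : ℕ) : Str n := fun _ => false

/-- `𝓕_n`: boolean functions on `{0,1}^n` with `f(θ) = 1`. -/
def Fcal (n : ℕ) : Set (Str n → Bool) := {f | f (theta n) = true}

/-- The complement `f* = 1 - f + p_n`. -/
noncomputable def star {n : ℕ} (f : Str n → Bool) : Str n → Bool :=
  fun s => if s = theta n then true else !(f s)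

/-- First block `s¹` of a string `s ∈ {0,1}^{m+n}`. -/
def fstStr {m n : ℕ} (s : Str (m + n)) : Str m := fun i => s (Fin.castAdd n i)

/-- Second block `s²` of a string `s ∈ {0,1}^{m+n}`. -/
def sndStr {m n : ℕ} (s : Str (m + n)) : Str n := fun j => s (Fin.natAdd m j)

/-- Tensor product `(f ⊗ g)(s) = f(s¹) · g(s²)`. -/
noncomputable def tensor {m n : ℕ} (f : Str m → Bool) (g : Str n → Bool) :
    Str (m + n) → Bool :=
  fun s => f (fstStr s) && g (sndStr s)

/-- `f ⅋ g := (f* ⊗ g*)*`. -/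
noncomputable def parr {m n : ℕ} (f : Str m → Bool) (g : Str n → Bool) :
    Str (m + n) → Bool :=
  star (tensor (star f) (star g))

/-- The causal product `f ◁ g` (`f` on the first `m` bits, `g` on the last `n` bits):
`(f ◁ g)(s) = f(s¹)` if `s¹ ≠ θ_m`, else `g(s²)`. -/
noncomputable def causalL {m n : ℕ} (f : Str m → Bool) (g : Str n → Bool) :
    Str (m + n) → Bool :=
  fun s => if fstStr s = theta m then g (sndStr s) else f (fstStr s)

/-- The causal product `g ◁ f` (`f` on the first `m` bits, `g` on the last `n` bits):
`(g ◁ f)(s) = g(s²)` if `s² ≠ θ_n`, else `f(s¹)`. -/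
noncomputable def causalR {m n : ℕ} (f : Str m → Bool) (g : Str n → Bool) :
    Str (m + n) → Bool :=
  fun s => if sndStr s = theta n then f (fstStr s) else g (sndStr s)

/-- `p_T(s) = 1` iff `s_i = 0` for all `i ∈ T`. -/
noncomputable def pSet {n : ℕ} (T : Set (Fin n)) : Str n → Bool :=
  fun s => decide (∀ i ∈ T, s i = false)

/-- The string `e^i` with `1` exactly in position `i`. -/
def eStr {n : ℕ} (i : Fin n) : Str n := fun j => decide (j = i)

/-- The string `e^{i,j}` with `1` exactly in positions `i` and `j`. -/
def e2Str {n : ℕ} (i j : Fin n) : Str n := fun l => decide (l = i ∨ l = j)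

/-- Input indices `I_f = {i : f(e^i) = 0}`. -/
def Iset {n : ℕ} (f : Str n → Bool) : Set (Fin n) := {i | f (eStr i) = false}

/-- Output indices `O_f = {j : f(e^j) = 1}`. -/
def Oset {n : ℕ} (f : Str n → Bool) : Set (Fin n) := {j | f (eStr j) = true}

/-- `f` is a subtype if `p_{I_f} ≤ f ≤ (p_{O_f})*` pointwise. -/
def IsSubtype {n : ℕ} (f : Str n → Bool) : Prop :=
  pSet (Iset f) ≤ f ∧ f ≤ star (pSet (Oset f))

/-- The partial order `≤_O`: `s ≤_O t` iff `s_i ≤ t_i` for `i ∈ O` and `s_i ≥ t_i` for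
`i ∉ O`. -/
def leO {n : ℕ} (O : Set (Fin n)) (s t : Str n) : Prop :=
  ∀ i, (i ∈ O → s i ≤ t i) ∧ (i ∉ O → t i ≤ s i)

/-- `f` is monotone (with respect to `≤_{O_f}`). -/
def MonotoneF {n : ℕ} (f : Str n → Bool) : Prop :=
  ∀ s t, leO (Oset f) s t → f s ≤ f t

/-- The action of a permutation on strings: `σ(s)_i = s_{σ⁻¹(i)}`. -/
def permAct {n : ℕ} (σ : Equiv.Perm (Fin n)) (s : Str n) : Str n := fun i => s (σ⁻¹ i)

/-- `(f ∘ σ)(s) = f(σ(s))`. -/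
def permComp {n : ℕ} (f : Str n → Bool) (σ : Equiv.Perm (Fin n)) : Str n → Bool :=
  fun s => f (permAct σ s)

/-- The inductively defined family `𝓣_n` of type functions. -/
inductive IsType : (n : ℕ) → (Str n → Bool) → Prop
  | one : IsType 1 (fun _ => true)
  | dual {n : ℕ} {f : Str n → Bool} : IsType n f → IsType n (star f)
  | perm {n : ℕ} {f : Str n → Bool} (σ : Equiv.Perm (Fin n)) :
      IsType n f → IsType n (permComp f σ)
  | tens {m n : ℕ} {f : Str m → Bool} {g : Str n → Bool} :
      IsType m f → IsType n g → IsType (m + n) (tensor f g)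

/-- Interpretation of a bit as an integer. -/
def toZ (b : Bool) : ℤ := (b.toNat : ℤ)

/-- `f` is a chain type: `f = Σ_{i=0}^N (-1)^i p_{S_i}` for a strictly increasing chain
`S_0 ⊊ ⋯ ⊊ S_N ⊆ [n]` with `N` even. -/
def IsChainType {n : ℕ} (f : Str n → Bool) : Prop :=
  ∃ N : ℕ, Even N ∧ ∃ S : Fin (N + 1) → Set (Fin n), StrictMono S ∧
    ∀ s : Str n, toZ (f s) = ∑ i : Fin (N + 1), (-1 : ℤ) ^ (i : ℕ) * toZ (pSet (S i) s)

/-- The Möbius transform `f̂_T`. -/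
noncomputable def mobius {n : ℕ} (f : Str n → Bool) (T : Set (Fin n)) : ℤ :=
  ∑ s : Str n, if ∀ j, j ∉ T → s j = true then
    (-1 : ℤ) ^ (∑ j : Fin n, if j ∈ T then (s j).toNat else 0) * toZ (f s)
  else 0

/-- The structure poset `𝓟_f = {T ⊆ [n] : f̂_T ≠ 0}`, ordered by inclusion. -/
noncomputable def structPoset {n : ℕ} (f : Str n → Bool) : Set (Set (Fin n)) :=
  {T | mobius f T ≠ 0}

/-- The label set `L_T = T ∖ ⋃ {S ∈ 𝓟_f : S ⊊ T}`. -/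
noncomputable def labels {n : ℕ} (f : Str n → Bool) (T : Set (Fin n)) : Set (Fin n) :=
  T \ ⋃₀ {S | S ∈ structPoset f ∧ S ⊂ T}

/-- The reduced structure poset `𝓟_f^0`: `∅` (if `∅ ∈ 𝓟_f`) together with all
`T ∈ 𝓟_f` with `L_T ≠ ∅`. -/
noncomputable def reducedPoset {n : ℕ} (f : Str n → Bool) : Set (Set (Fin n)) :=
  {T | T ∈ structPoset f ∧ (T = ∅ ∨ labels f T ≠ ∅)}

/-- The rank `ρ_f(T)`: the length of a longest chain in `𝓟_f` with top element `T`
(this is the length of any maximal such chain in the graded poset `𝓟_f`). -/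
noncomputable def rank {n : ℕ} (f : Str n → Bool) (T : Set (Fin n)) : ℕ :=
  sSup {k | ∃ c : Fin (k + 1) → Set (Fin n), StrictMono c ∧
    (∀ i, c i ∈ structPoset f) ∧ c (Fin.last k) = T}

/-- The rank `r(f)` of the whole poset `𝓟_f`: the common length of its maximal chains. -/
noncomputable def rk {n : ℕ} (f : Str n → Bool) : ℕ :=
  sSup {k | ∃ c : Fin (k + 1) → Set (Fin n), StrictMono c ∧ ∀ i, c i ∈ structPoset f}

/-- `𝕋_i^f = {T ∈ 𝓟_f : i ∈ L_T}`. -/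
noncomputable def Tset {n : ℕ} (f : Str n → Bool) (i : Fin n) : Set (Set (Fin n)) :=
  {T | T ∈ structPoset f ∧ i ∈ labels f T}

/-- The rank `r_f(i)` of an index: the common rank of elements of `𝕋_i^f`, or `r(f)+1`
if `𝕋_i^f = ∅` (a free output). -/
noncomputable def idxRank {n : ℕ} (f : Str n → Bool) (i : Fin n) : ℕ :=
  if (Tset f i).Nonempty then sSup (rank f '' Tset f i) else rk f + 1

/-- `X` is the greatest lower bound of `S` and `T` in the poset `(P, ⊆)`. -/
def IsGLBIn {n : ℕ} (P : Set (Set (Fin n))) (S T X : Set (Fin n)) : Prop :=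
  X ∈ P ∧ X ⊆ S ∧ X ⊆ T ∧ ∀ Y ∈ P, Y ⊆ S → Y ⊆ T → Y ⊆ X

/-- `X` is the least upper bound of `S` and `T` in the poset `(P, ⊆)`. -/
def IsLUBIn {n : ℕ} (P : Set (Set (Fin n))) (S T X : Set (Fin n)) : Prop :=
  X ∈ P ∧ S ⊆ X ∧ T ⊆ X ∧ ∀ Y ∈ P, S ⊆ Y → T ⊆ Y → X ⊆ Y

/-- `S^↓`: the downset generated by `S` in `𝓟_f^0`. -/
noncomputable def downSet {n : ℕ} (f : Str n → Bool) (S : Set (Fin n)) :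
    Set (Set (Fin n)) :=
  {X | X ∈ reducedPoset f ∧ X ⊆ S}

/-- `S^↑`: the upset generated by `S` in `𝓟_f^0`. -/
noncomputable def upSet {n : ℕ} (f : Str n → Bool) (S : Set (Fin n)) :
    Set (Set (Fin n)) :=
  {X | X ∈ reducedPoset f ∧ S ⊆ X}

/-- The pair rank `r_f(i,j)`: `max{ρ_f(S ∧ T) : S ∈ 𝕋_i^f, T ∈ 𝕋_j^f, S ∧ T exists in 𝓟_f}`;
`-1` if this set is empty, unless `i` or `j` is a free output, in which case it is
`min{r_f(i), r_f(j)}`. -/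
noncomputable def pairRank {n : ℕ} (f : Str n → Bool) (i j : Fin n) : ℤ :=
  if _h : ∃ r : ℤ, ∃ S ∈ Tset f i, ∃ T ∈ Tset f j, ∃ X, IsGLBIn (structPoset f) S T X ∧
      r = (rank f X : ℤ) then
    sSup {r : ℤ | ∃ S ∈ Tset f i, ∃ T ∈ Tset f j, ∃ X, IsGLBIn (structPoset f) S T X ∧
      r = (rank f X : ℤ)}
  else if Tset f i = ∅ ∨ Tset f j = ∅ then
    min (idxRank f i : ℤ) (idxRank f j : ℤ)
  else -1

/-- Membership in the sublattice generated by a set `S`. -/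
inductive InLatGen {α : Type*} [Lattice α] (S : Set α) : α → Prop
  | base {a : α} : a ∈ S → InLatGen S a
  | sup {a b : α} : InLatGen S a → InLatGen S b → InLatGen S (a ⊔ b)
  | inf {a b : α} : InLatGen S a → InLatGen S b → InLatGen S (a ⊓ b)

/-- For `s ≰_O θ`, `f_s` is the function with support `U_s ∪ U_θ` (w.r.t. `≤_O`). -/
noncomputable def fStr {n : ℕ} (O : Set (Fin n)) (s : Str n) : Str n → Bool :=
  fun t => decide (leO O s t ∨ leO O (theta n) t)

/-- A string `s ∉ D_θ ∪ U_θ` is basic (for `≤_O`) if `s_j = 1` for exactly one `j ∈ O`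
and `s_i = 0` for at most one `i ∈ I = Oᶜ`. -/
def IsBasic {n : ℕ} (O : Set (Fin n)) (s : Str n) : Prop :=
  ¬ leO O s (theta n) ∧ ¬ leO O (theta n) s ∧
  (∃! j, j ∈ O ∧ s j = true) ∧
  (∀ i i', i ∈ Oᶜ → i' ∈ Oᶜ → s i = false → s i' = false → i = i')

/-! ### Auxiliary lemmas for `stmt10` -/

lemma bool_le_of_imp {a b : Bool} (h : a = true → b = true) : a ≤ b := by
  cases a
  · exact Bool.false_le b
  · rw [h rfl]

lemma imp_of_bool_le {a b : Bool} (h : a ≤ b) : a = true → b = true := by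
  intro ha; subst ha; exact Bool.eq_true_of_true_le h

lemma eStr_ne_theta {n : ℕ} (i : Fin n) : eStr i ≠ theta n := by
  intro h
  have := congrFun h i
  simp [eStr, theta] at this

lemma exists_true_of_ne_theta {n : ℕ} {s : Str n} (h : s ≠ theta n) :
    ∃ j, s j = true := by
  by_contra hc
  push_neg at hc
  exact h (funext fun j => by simpa [theta] using hc j)

/-- First-order characterization of the lower subtype bound. -/
def LowChar {n : ℕ} (f : Str n → Bool) : Prop :=
  ∀ s : Str n, (∀ i, f (eStr i) = false → s i = false) → f s = true

/-- First-order characterization of the upper subtype bound. -/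
def UpChar {n : ℕ} (f : Str n → Bool) : Prop :=
  ∀ s : Str n, s ≠ theta n → f s = true → ∃ j, f (eStr j) = true ∧ s j = true

lemma isSubtype_iff {n : ℕ} (f : Str n → Bool) :
    IsSubtype f ↔ LowChar f ∧ UpChar f := by
  constructor
  · rintro ⟨h1, h2⟩
    constructor
    · intro s hs
      refine imp_of_bool_le (h1 s) ?_
      simp only [pSet, decide_eq_true_iff]
      intro i hi; exact hs i hi
    · intro s hs hfs
      have hst := imp_of_bool_le (h2 s) hfs
      rw [star, if_neg hs] at hst
      have h3 : pSet (Oset f) s = false := by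
        cases h : pSet (Oset f) s
        · rfl
        · rw [h] at hst; simp at hst
      simp only [pSet, decide_eq_false_iff_not] at h3
      push_neg at h3
      obtain ⟨j, hj, hsj⟩ := h3
      exact ⟨j, hj, by simpa using hsj⟩
  · rintro ⟨h1, h2⟩
    constructor
    · intro s
      apply bool_le_of_imp
      intro hp
      simp only [pSet, decide_eq_true_iff] at hp
      exact h1 s hp
    · intro s
      apply bool_le_of_imp
      intro hfs
      rw [star]
      by_cases hs : s = theta n
      · rw [if_pos hs]
      · rw [if_neg hs]
        obtain ⟨j, hj, hsj⟩ := h2 s hs hfs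
        have hp : pSet (Oset f) s = false := by
          simp only [pSet, decide_eq_false_iff_not]
          push_neg
          exact ⟨j, hj, by simp [hsj]⟩
        rw [hp]; rfl

lemma theta_of_lowChar {n : ℕ} {f : Str n → Bool} (h : LowChar f) :
    f (theta n) = true :=
  h _ (fun _ _ => rfl)

/-- The key inductive invariant. -/
def GoodF {n : ℕ} (f : Str n → Bool) : Prop :=
  LowChar f ∧ UpChar f ∧ MonotoneF f

lemma mem_Oset {n : ℕ} {f : Str n → Bool} {i : Fin n} :
    i ∈ Oset f ↔ f (eStr i) = true := Iff.rfl

lemma star_apply_ne {n : ℕ} (f : Str n → Bool) {s : Str n} (h : s ≠ theta n) :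
    star f s = !(f s) := if_neg h

lemma star_eStr {n : ℕ} (f : Str n → Bool) (i : Fin n) :
    star f (eStr i) = !(f (eStr i)) := star_apply_ne f (eStr_ne_theta i)

lemma good_dual {n : ℕ} {f : Str n → Bool} (hf : GoodF f) : GoodF (star f) := by
  obtain ⟨h1, h2, h3⟩ := hf
  have hO : ∀ i : Fin n, star f (eStr i) = false ↔ f (eStr i) = true := by
    intro i; rw [star_eStr]; cases f (eStr i) <;> simp
  have hO' : ∀ i : Fin n, star f (eStr i) = true ↔ f (eStr i) = false := by
    intro i; rw [star_eStr]; cases f (eStr i) <;> simp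
  refine ⟨?_, ?_, ?_⟩
  · -- LowChar (star f)
    intro s hs
    by_cases hth : s = theta n
    · rw [star, if_pos hth]
    · rw [star_apply_ne f hth]
      cases hfs : f s
      · rfl
      · obtain ⟨j, hj, hsj⟩ := h2 s hth hfs
        have hsf := hs j ((hO j).2 hj)
        rw [hsf] at hsj
        exact absurd hsj (by simp)
  · -- UpChar (star f)
    intro s hth hfs
    rw [star_apply_ne f hth] at hfs
    have hfsf : f s = false := by simpa using hfs
    by_contra hc
    push_neg at hc
    have hall : ∀ i, f (eStr i) = false → s i = false := by
      intro i hi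
      cases hsi : s i
      · rfl
      · exact absurd hsi (hc i ((hO' i).2 hi))
    have hft := h1 s hall
    rw [hft] at hfsf
    simp at hfsf
  · -- MonotoneF (star f)
    intro s t hle
    apply bool_le_of_imp
    intro hst
    by_contra hc
    have htf : star f t = false := Bool.eq_false_iff.2 hc
    have hth : t ≠ theta n := by
      intro h; rw [h, star, if_pos rfl] at htf; simp at htf
    rw [star_apply_ne f hth] at htf
    have hft : f t = true := by simpa using htf
    have hle' : leO (Oset f) t s := by
      intro i
      have hi := hle i
      constructor
      · intro hiO
        refine hi.2 ?_
        rw [mem_Oset, hO']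
        simp [mem_Oset.1 hiO]
      · intro hiO
        refine hi.1 ?_
        rw [mem_Oset, hO']
        exact Bool.eq_false_iff.2 hiO
    have hfs : f s = true := imp_of_bool_le (h3 t s hle') hft
    have hsth : s ≠ theta n := by
      intro h
      subst h
      obtain ⟨j, hj, hsj⟩ := h2 t hth hft
      have h5 := (hle' j).1 hj
      rw [hsj] at h5
      have h6 : theta n j = true := Bool.eq_true_of_true_le h5
      simp [theta] at h6
    rw [star_apply_ne f hsth, hfs] at hst
    simp at hst

lemma permAct_theta {n : ℕ} (σ : Equiv.Perm (Fin n)) :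
    permAct σ (theta n) = theta n := rfl

lemma permAct_eStr {n : ℕ} (σ : Equiv.Perm (Fin n)) (i : Fin n) :
    permAct σ (eStr i) = eStr (σ i) := by
  funext j
  simp only [permAct, eStr, decide_eq_decide]
  constructor
  · intro h; rw [← h]; simp
  · intro h; rw [h]; simp

lemma good_perm {n : ℕ} {f : Str n → Bool} (σ : Equiv.Perm (Fin n)) (hf : GoodF f) :
    GoodF (permComp f σ) := by
  obtain ⟨h1, h2, h3⟩ := hf
  have hE : ∀ i : Fin n, permComp f σ (eStr i) = f (eStr (σ i)) := by
    intro i; rw [permComp, permAct_eStr]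
  have hth : ∀ s : Str n, permAct σ s = theta n ↔ s = theta n := by
    intro s
    constructor
    · intro h
      funext j
      have := congrFun h (σ j)
      simpa [permAct, theta] using this
    · intro h; rw [h]; rfl
  refine ⟨?_, ?_, ?_⟩
  · intro s hs
    rw [permComp]
    apply h1
    intro j hj
    exact hs (σ⁻¹ j) (by rw [hE, ← Equiv.Perm.mul_apply, mul_inv_cancel, Equiv.Perm.one_apply]; exact hj)
  · intro s hsth hfs
    rw [permComp] at hfs
    obtain ⟨j, hj, hsj⟩ := h2 _ (fun h => hsth ((hth s).1 h)) hfs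
    exact ⟨σ⁻¹ j, by rw [hE, ← Equiv.Perm.mul_apply, mul_inv_cancel, Equiv.Perm.one_apply]; exact hj, hsj⟩
  · intro s t hle
    apply bool_le_of_imp
    intro hfs
    rw [permComp] at hfs ⊢
    refine imp_of_bool_le (h3 _ _ ?_) hfs
    intro j
    have hi := hle (σ⁻¹ j)
    constructor
    · intro hjO
      refine hi.1 ?_
      rw [mem_Oset, hE, ← Equiv.Perm.mul_apply, mul_inv_cancel, Equiv.Perm.one_apply]
      exact hjO
    · intro hjO
      refine hi.2 ?_
      rw [mem_Oset, hE, ← Equiv.Perm.mul_apply, mul_inv_cancel, Equiv.Perm.one_apply]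
      exact hjO

lemma fstStr_theta {m n : ℕ} : fstStr (theta (m + n)) = theta m := rfl
lemma sndStr_theta {m n : ℕ} : sndStr (theta (m + n)) = theta n := rfl

lemma theta_iff_blocks {m n : ℕ} (s : Str (m + n)) :
    s = theta (m + n) ↔ fstStr s = theta m ∧ sndStr s = theta n := by
  constructor
  · rintro rfl; exact ⟨rfl, rfl⟩
  · rintro ⟨h1, h2⟩
    funext k
    refine Fin.addCases (fun i => ?_) (fun j => ?_) k
    · exact congrFun h1 i
    · exact congrFun h2 j

lemma fstStr_eStr_castAdd {m n : ℕ} (i : Fin m) :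
    fstStr (eStr (Fin.castAdd n i)) = eStr i := by
  funext j
  simp only [fstStr, eStr]
  congr 1
  simp [Fin.ext_iff]

lemma sndStr_eStr_castAdd {m n : ℕ} (i : Fin m) :
    sndStr (eStr (Fin.castAdd n i)) = theta n := by
  funext j
  simp only [sndStr, eStr, theta]
  simp only [decide_eq_false_iff_not]
  intro h
  have := Fin.ext_iff.1 h
  simp [Fin.natAdd, Fin.castAdd, Fin.castLE] at this
  omega

lemma fstStr_eStr_natAdd {m n : ℕ} (j : Fin n) :
    fstStr (eStr (Fin.natAdd m j)) = theta m := by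
  funext i
  simp only [fstStr, eStr, theta]
  simp only [decide_eq_false_iff_not]
  intro h
  have := Fin.ext_iff.1 h
  simp [Fin.natAdd, Fin.castAdd, Fin.castLE] at this
  omega

lemma sndStr_eStr_natAdd {m n : ℕ} (j : Fin n) :
    sndStr (eStr (Fin.natAdd m j)) = eStr j := by
  funext i
  simp only [sndStr, eStr]
  congr 1
  simp [Fin.ext_iff]

lemma good_tensor {m n : ℕ} {f : Str m → Bool} {g : Str n → Bool}
    (hf : GoodF f) (hg : GoodF g) : GoodF (tensor f g) := by
  obtain ⟨hf1, hf2, hf3⟩ := hf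
  obtain ⟨hg1, hg2, hg3⟩ := hg
  have hfth : f (theta m) = true := theta_of_lowChar hf1
  have hgth : g (theta n) = true := theta_of_lowChar hg1
  have hEc : ∀ i : Fin m, tensor f g (eStr (Fin.castAdd n i)) = f (eStr i) := by
    intro i
    rw [tensor, fstStr_eStr_castAdd, sndStr_eStr_castAdd, hgth, Bool.and_true]
  have hEn : ∀ j : Fin n, tensor f g (eStr (Fin.natAdd m j)) = g (eStr j) := by
    intro j
    rw [tensor, fstStr_eStr_natAdd, sndStr_eStr_natAdd, hfth, Bool.true_and]
  refine ⟨?_, ?_, ?_⟩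
  · intro s hs
    rw [tensor]
    rw [hf1 (fstStr s) (fun i hi => hs (Fin.castAdd n i) (by rw [hEc]; exact hi)),
      hg1 (sndStr s) (fun j hj => hs (Fin.natAdd m j) (by rw [hEn]; exact hj))]
    rfl
  · intro s hsth hfs
    rw [tensor, Bool.and_eq_true] at hfs
    by_cases h1 : fstStr s = theta m
    · have h2 : sndStr s ≠ theta n := fun h2 => hsth ((theta_iff_blocks s).2 ⟨h1, h2⟩)
      obtain ⟨j, hj, hsj⟩ := hg2 (sndStr s) h2 hfs.2
      exact ⟨Fin.natAdd m j, by rw [hEn]; exact hj, hsj⟩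
    · obtain ⟨i, hi, hsi⟩ := hf2 (fstStr s) h1 hfs.1
      exact ⟨Fin.castAdd n i, by rw [hEc]; exact hi, hsi⟩
  · intro s t hle
    apply bool_le_of_imp
    intro hst
    rw [tensor, Bool.and_eq_true] at hst
    rw [tensor, Bool.and_eq_true]
    constructor
    · refine imp_of_bool_le (hf3 (fstStr s) (fstStr t) ?_) hst.1
      intro i
      have hk := hle (Fin.castAdd n i)
      constructor
      · intro hiO
        exact hk.1 (by rw [mem_Oset, hEc]; exact hiO)
      · intro hiO
        refine hk.2 ?_
        rw [mem_Oset, hEc]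
        exact hiO
    · refine imp_of_bool_le (hg3 (sndStr s) (sndStr t) ?_) hst.2
      intro j
      have hk := hle (Fin.natAdd m j)
      constructor
      · intro hjO
        exact hk.1 (by rw [mem_Oset, hEn]; exact hjO)
      · intro hjO
        refine hk.2 ?_
        rw [mem_Oset, hEn]
        exact hjO

lemma good_of_isType {n : ℕ} {f : Str n → Bool} (hf : IsType n f) : GoodF f := by
  induction hf with
  | one =>
      refine ⟨fun s _ => rfl, fun s hs _ => ?_, fun s t _ => le_refl _⟩
      obtain ⟨j, hj⟩ := exists_true_of_ne_theta hs
      exact ⟨j, rfl, hj⟩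
  | dual _ ih => exact good_dual ih
  | perm σ _ ih => exact good_perm σ ih
  | tens _ _ ihf ihg => exact good_tensor ihf ihg

/-- every type function is a monotone subtype. -/
theorem stmt10 {n : ℕ} (f : Str n → Bool) (hf : IsType n f) :
    IsSubtype f ∧ MonotoneF f := by
  obtain ⟨h1, h2, h3⟩ := good_of_isType hf
  exact ⟨(isSubtype_iff f).2 ⟨h1, h2⟩, h3⟩

end HOT
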